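/- Suppose θ, h₃ : I → ℝ are C¹ on an interval I with θ(t) ∉ (π/2)ℤ for all t, satisfying θ' = h₃/|sin 2θ| and h₃' = s₁h₄ + s₂h₅, where s₁ = sgn cos θ, s₂ = sgn sin θ and h₄, h₅ are constants. Then E(t) = h₃(t)²/2 + sgn(cos θ(t))cos²θ(t)·h₅ − sgn(sin θ(t))sin²θ(t)·h₄ is constant on I. -/

import Mathlib

set_option maxHeartbeats 1000000

open Real

theorem energy_constant_theta_system
    (a b : ℝ) (hab : a < b) (h4 h5 : ℝ)
    (θ h3 : ℝ → ℝ)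
    (hθ : ∀ t ∈ Set.Ioo a b, ∀ n : ℤ, θ t ≠ n * (π / 2))
    (hdθ : ∀ t ∈ Set.Ioo a b,
      HasDerivAt θ (h3 t / |Real.sin (2 * θ t)|) t)
    (hdh3 : ∀ t ∈ Set.Ioo a b,
      HasDerivAt h3 (Real.sign (Real.cos (θ t)) * h4
        + Real.sign (Real.sin (θ t)) * h5) t) :
    ∀ t₁ ∈ Set.Ioo a b, ∀ t₂ ∈ Set.Ioo a b,
      (h3 t₁) ^ 2 / 2
        + Real.sign (Real.cos (θ t₁)) * (Real.cos (θ t₁)) ^ 2 * h5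
        - Real.sign (Real.sin (θ t₁)) * (Real.sin (θ t₁)) ^ 2 * h4
      = (h3 t₂) ^ 2 / 2
        + Real.sign (Real.cos (θ t₂)) * (Real.cos (θ t₂)) ^ 2 * h5
        - Real.sign (Real.sin (θ t₂)) * (Real.sin (θ t₂)) ^ 2 * h4 := by
  set E : ℝ → ℝ := fun t => (h3 t) ^ 2 / 2
      + Real.sign (Real.cos (θ t)) * (Real.cos (θ t)) ^ 2 * h5
      - Real.sign (Real.sin (θ t)) * (Real.sin (θ t)) ^ 2 * h4 with hE
  -- sin and cos of θ are nonzero on the interval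
  have hsin : ∀ t ∈ Set.Ioo a b, Real.sin (θ t) ≠ 0 := by
    intro t ht h
    obtain ⟨n, hn⟩ := Real.sin_eq_zero_iff.mp h
    exact hθ t ht (2 * n) (by push_cast; linarith)
  have hcos : ∀ t ∈ Set.Ioo a b, Real.cos (θ t) ≠ 0 := by
    intro t ht h
    obtain ⟨n, hn⟩ := Real.cos_eq_zero_iff.mp h
    exact hθ t ht (2 * n + 1) (by push_cast [hn]; ring)
  -- E has derivative 0 at each point
  have key : ∀ t ∈ Set.Ioo a b, HasDerivAt E 0 t := by
    intro t ht
    have hθc : ContinuousAt θ t := (hdθ t ht).continuousAt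
    set c := Real.sign (Real.cos (θ t)) with hc
    set s := Real.sign (Real.sin (θ t)) with hs
    -- local model with frozen signs
    set g : ℝ → ℝ := fun u => (h3 u) ^ 2 / 2
        + c * (Real.cos (θ u)) ^ 2 * h5 - s * (Real.sin (θ u)) ^ 2 * h4 with hg
    have hev : E =ᶠ[nhds t] g := by
      have hcc : ContinuousAt (fun u => Real.cos (θ u)) t :=
        (Real.continuous_cos.continuousAt).comp hθc
      have hsc : ContinuousAt (fun u => Real.sin (θ u)) t :=
        (Real.continuous_sin.continuousAt).comp hθc
      have h1 : ∀ᶠ u in nhds t, Real.sign (Real.cos (θ u)) = c := by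
        rcases (hcos t ht).lt_or_gt with h | h
        · filter_upwards [hcc.eventually_lt_const h] with u hu
          rw [hc, Real.sign_of_neg h, Real.sign_of_neg hu]
        · filter_upwards [hcc.eventually_const_lt h] with u hu
          rw [hc, Real.sign_of_pos h, Real.sign_of_pos hu]
      have h2 : ∀ᶠ u in nhds t, Real.sign (Real.sin (θ u)) = s := by
        rcases (hsin t ht).lt_or_gt with h | h
        · filter_upwards [hsc.eventually_lt_const h] with u hu
          rw [hs, Real.sign_of_neg h, Real.sign_of_neg hu]
        · filter_upwards [hsc.eventually_const_lt h] with u hu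
          rw [hs, Real.sign_of_pos h, Real.sign_of_pos hu]
      filter_upwards [h1, h2] with u hu1 hu2
      simp only [hE, hg, hu1, hu2]
    have hdg : HasDerivAt g
        ((h3 t * (c * h4 + s * h5)) / 1
          + c * (2 * Real.cos (θ t) * (-Real.sin (θ t) * (h3 t / |Real.sin (2 * θ t)|))) * h5
          - s * (2 * Real.sin (θ t) * (Real.cos (θ t) * (h3 t / |Real.sin (2 * θ t)|))) * h4) t := by
      have d1 : HasDerivAt (fun u => (h3 u) ^ 2 / 2) (h3 t * (c * h4 + s * h5) / 1) t := by
        have := ((hdh3 t ht).fun_pow 2).div_const 2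
        refine this.congr_deriv ?_
        push_cast
        ring
      have d2 : HasDerivAt (fun u => c * (Real.cos (θ u)) ^ 2 * h5)
          (c * (2 * Real.cos (θ t) * (-Real.sin (θ t) * (h3 t / |Real.sin (2 * θ t)|))) * h5) t := by
        have := (((hdθ t ht).cos).fun_pow 2).const_mul c |>.mul_const h5
        refine this.congr_deriv ?_
        push_cast
        ring
      have d3 : HasDerivAt (fun u => s * (Real.sin (θ u)) ^ 2 * h4)
          (s * (2 * Real.sin (θ t) * (Real.cos (θ t) * (h3 t / |Real.sin (2 * θ t)|))) * h4) t := by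
        have := (((hdθ t ht).sin).fun_pow 2).const_mul s |>.mul_const h4
        refine this.congr_deriv ?_
        push_cast
        ring
      exact (d1.add d2).sub d3
    have hzero : (h3 t * (c * h4 + s * h5)) / 1
          + c * (2 * Real.cos (θ t) * (-Real.sin (θ t) * (h3 t / |Real.sin (2 * θ t)|))) * h5
          - s * (2 * Real.sin (θ t) * (Real.cos (θ t) * (h3 t / |Real.sin (2 * θ t)|))) * h4 = 0 := by
      have h2θ : Real.sin (2 * θ t) = 2 * Real.sin (θ t) * Real.cos (θ t) := by
        rw [Real.sin_two_mul]
      rcases (hcos t ht).lt_or_gt with hC | hC <;>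
        rcases (hsin t ht).lt_or_gt with hS | hS
      · simp only [hc, hs, Real.sign_of_neg hC, Real.sign_of_neg hS, h2θ,
          abs_of_pos (show (0:ℝ) < 2 * Real.sin (θ t) * Real.cos (θ t) by nlinarith)]
        field_simp [hC.ne, hS.ne]
        ring
      · simp only [hc, hs, Real.sign_of_neg hC, Real.sign_of_pos hS, h2θ,
          abs_of_neg (show 2 * Real.sin (θ t) * Real.cos (θ t) < 0 by nlinarith)]
        field_simp [hC.ne, hS.ne']
        ring
      · simp only [hc, hs, Real.sign_of_pos hC, Real.sign_of_neg hS, h2θ,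
          abs_of_neg (show 2 * Real.sin (θ t) * Real.cos (θ t) < 0 by nlinarith)]
        field_simp [hC.ne', hS.ne]
        ring
      · simp only [hc, hs, Real.sign_of_pos hC, Real.sign_of_pos hS, h2θ,
          abs_of_pos (show (0:ℝ) < 2 * Real.sin (θ t) * Real.cos (θ t) by nlinarith)]
        field_simp [hC.ne', hS.ne']
        ring
    exact (hzero ▸ hdg).congr_of_eventuallyEq hev
  -- conclude constancy on the convex set
  intro t₁ ht₁ t₂ ht₂
  have hdiff : DifferentiableOn ℝ E (Set.Ioo a b) := fun x hx =>
    (key x hx).differentiableAt.differentiableWithinAt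
  have hfd : ∀ x ∈ Set.Ioo a b, fderivWithin ℝ E (Set.Ioo a b) x = 0 := by
    intro x hx
    have h1 : fderivWithin ℝ E (Set.Ioo a b) x = fderiv ℝ E x :=
      fderivWithin_of_isOpen isOpen_Ioo hx
    have h2 : HasFDerivAt E (0 : ℝ →L[ℝ] ℝ) x := by
      have h3' := (key x hx).hasFDerivAt
      have : (ContinuousLinearMap.toSpanSingleton ℝ (0:ℝ)) = 0 := by
        ext; simp
      rwa [this] at h3'
    rw [h1, h2.fderiv]
  exact (convex_Ioo a b).is_const_of_fderivWithin_eq_zero hdiff hfd ht₁ ht₂
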